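/- The conditional expectation of Y given the σ-algebra generated by X satisfies 𝔼[Y | σ(X)] = Ȳ + (Σ_xy/Σ_xx)·(X − X̄) ℙ-almost everywhere; that is, the conditional expectation condExp (MeasurableSpace.comap X) ℙ Y is almost everywhere equal to the function ω ↦ Ȳ + (Σ_xy/Σ_xx)·(X ω − X̄). -/

import Mathlib

open MeasureTheory ProbabilityTheory Real Filter Topology

lemma integrable_id_gaussianReal (m : ℝ) (v : NNReal) :
    Integrable (fun x => x) (gaussianReal m v) := by
  rcases eq_or_ne v 0 with hv | hv
  · rw [hv, gaussianReal_zero_var]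
    exact (integrable_const m).congr (MeasureTheory.ae_eq_dirac (fun x : ℝ => x)).symm
  · rw [gaussianReal_of_var_ne_zero _ hv]
    rw [integrable_withDensity_iff (measurable_gaussianPDF _ _)
      (Filter.Eventually.of_forall fun x => ENNReal.ofReal_lt_top)]
    have hv' : (0:ℝ) < v := by positivity
    have h2v : (0:ℝ) < (2 * v : ℝ)⁻¹ := by positivity
    have : Integrable (fun x => (x + m) * ((√(2 * π * v))⁻¹ * rexp (-(2*v:ℝ)⁻¹ * x ^ 2))) ℙ := by
      have h1 : Integrable (fun x => (√(2 * π * v))⁻¹ * (x * rexp (-(2*v:ℝ)⁻¹ * x ^ 2))) ℙ :=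
        (integrable_mul_exp_neg_mul_sq h2v).const_mul _
      have h2 : Integrable (fun x => (m * (√(2 * π * v))⁻¹) * rexp (-(2*v:ℝ)⁻¹ * x ^ 2)) ℙ :=
        (integrable_exp_neg_mul_sq h2v).const_mul _
      refine (h1.add h2).congr (Filter.Eventually.of_forall fun x => ?_)
      simp only [Pi.add_apply]
      ring
    have := this.comp_sub_right m
    refine this.congr (Filter.Eventually.of_forall fun x => ?_)
    simp only [gaussianPDF, gaussianPDFReal]
    rw [ENNReal.toReal_ofReal (by positivity)]
    have h3 : -(x - m) ^ 2 / (2 * (v:ℝ)) = -(2*(v:ℝ))⁻¹ * (x-m)^2 := by ring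
    rw [h3]
    ring

lemma integrable_lip_comp {Ω : Type*} [MeasurableSpace Ω] {P : Measure Ω} [IsProbabilityMeasure P]
    {f : Ω → ℝ} (hf : Integrable f P) (hfm : Measurable f) {g : ℝ → ℝ} {L : ℝ}
    (hgc : Continuous g) (hLip : ∀ x y, |g x - g y| ≤ L * |x - y|) :
    Integrable (fun ω => g (f ω)) P := by
  have : Integrable (fun ω => |g 0| + L * |f ω|) P :=
    (integrable_const _).add ((hf.abs).const_mul L)
  refine this.mono' ((hgc.measurable.comp hfm).aestronglyMeasurable) ?_
  refine Filter.Eventually.of_forall fun ω => ?_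
  have h2 : |g (f ω)| ≤ |g 0| + |g (f ω) - g 0| := by
    have := abs_sub_abs_le_abs_sub (g (f ω)) (g 0)
    linarith [abs_nonneg (g (f ω) - g 0)]
  have h3 : |g (f ω) - g 0| ≤ L * |f ω| := by simpa using hLip (f ω) 0
  calc ‖g (f ω)‖ = |g (f ω)| := rfl
    _ ≤ |g 0| + L * |f ω| := by linarith

lemma key_zero {Ω : Type*} [MeasurableSpace Ω] (P : Measure Ω) [IsProbabilityMeasure P]
    (W Z : Ω → ℝ) (hW : Measurable W) (hZ : Measurable Z)
    (hWint : Integrable W P) (hZint : Integrable Z P)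
    (heven : ∀ b : ℝ, Measure.map (fun ω => W ω + b * Z ω) P
      = Measure.map (fun ω => W ω + (-b) * Z ω) P)
    (g h : ℝ → ℝ) (L : ℝ) (hL : 0 ≤ L) (hgc : Continuous g) (hh : Continuous h)
    (hLip : ∀ x y, |g x - g y| ≤ L * |x - y|)
    (hderiv : ∀ x, HasDerivAt g (h x) x) :
    ∫ ω, Z ω * h (W ω) ∂P = 0 := by
  set b : ℕ → ℝ := fun n => 1 / ((n : ℝ) + 1) with hb_def
  have hb_pos : ∀ n, 0 < b n := fun n => by positivity
  set F : ℕ → Ω → ℝ := fun n ω =>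
    (g (W ω + b n * Z ω) - g (W ω + (-b n) * Z ω)) / (2 * b n) with hF_def
  -- integral of each F n is zero
  have hmeas : ∀ c : ℝ, Measurable (fun ω => W ω + c * Z ω) :=
    fun c => hW.add (measurable_const.mul hZ)
  have hint : ∀ c : ℝ, Integrable (fun ω => g (W ω + c * Z ω)) P := fun c =>
    integrable_lip_comp (hWint.add (hZint.const_mul c)) (hmeas c) hgc hLip
  have hFint : ∀ n, Integrable (F n) P := fun n =>
    (((hint (b n)).sub (hint (-b n)))).div_const _
  have hF_zero : ∀ n, ∫ ω, F n ω ∂P = 0 := by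
    intro n
    have h1 : ∫ ω, g (W ω + b n * Z ω) ∂P = ∫ ω, g (W ω + (-b n) * Z ω) ∂P := by
      rw [← integral_map (hmeas (b n)).aemeasurable hgc.aestronglyMeasurable,
        ← integral_map (hmeas (-b n)).aemeasurable hgc.aestronglyMeasurable, heven (b n)]
    simp only [hF_def]
    rw [integral_div, integral_sub (hint (b n)) (hint (-b n)), h1, sub_self, zero_div]
  -- bound
  have hbound : ∀ n, ∀ᵐ ω ∂P, ‖F n ω‖ ≤ L * |Z ω| := by
    intro n
    refine Filter.Eventually.of_forall fun ω => ?_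
    have hnum := hLip (W ω + b n * Z ω) (W ω + (-b n) * Z ω)
    have harg : |(W ω + b n * Z ω) - (W ω + (-b n) * Z ω)| = 2 * b n * |Z ω| := by
      have : (W ω + b n * Z ω) - (W ω + (-b n) * Z ω) = (2 * b n) * Z ω := by ring
      rw [this, abs_mul, abs_of_pos (by positivity : (0:ℝ) < 2 * b n)]
    rw [harg] at hnum
    have h2b : (0:ℝ) < 2 * b n := by positivity
    calc ‖F n ω‖ = |g (W ω + b n * Z ω) - g (W ω + (-b n) * Z ω)| / (2 * b n) := by
          simp only [hF_def, Real.norm_eq_abs, abs_div, abs_of_pos h2b]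
      _ ≤ L * (2 * b n * |Z ω|) / (2 * b n) := (div_le_div_iff_of_pos_right h2b).mpr hnum
      _ = L * |Z ω| := by rw [mul_div_assoc, mul_div_cancel_left₀ _ h2b.ne']
  -- pointwise convergence
  have hptwise : ∀ᵐ ω ∂P, Tendsto (fun n => F n ω) atTop (𝓝 (Z ω * h (W ω))) := by
    refine Filter.Eventually.of_forall fun ω => ?_
    set x := W ω; set z := Z ω
    set φ : ℝ → ℝ := fun t => g (x + t * z) with hφ
    have hφd : HasDerivAt φ (h x * z) 0 := by
      have hu : HasDerivAt (fun t : ℝ => x + t * z) z 0 := by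
        simpa using ((hasDerivAt_id (0:ℝ)).mul_const z).const_add x
      have := (hderiv (x + 0 * z)).comp 0 hu
      simpa [hφ, Function.comp_def] using this
    have hslope := hasDerivAt_iff_tendsto_slope.mp hφd
    have hb0 : Tendsto b atTop (𝓝[≠] (0:ℝ)) := by
      refine tendsto_nhdsWithin_of_tendsto_nhds_of_eventually_within _
        tendsto_one_div_add_atTop_nhds_zero_nat ?_
      exact Filter.Eventually.of_forall fun n => (hb_pos n).ne'
    have hbneg : Tendsto (fun n => -(b n)) atTop (𝓝[≠] (0:ℝ)) := by
      refine tendsto_nhdsWithin_of_tendsto_nhds_of_eventually_within _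
        (by simpa [hb_def, one_div] using (tendsto_one_div_add_atTop_nhds_zero_nat (𝕜 := ℝ)).neg) ?_
      refine Filter.Eventually.of_forall fun n => ?_
      simp only [Set.mem_compl_iff, Set.mem_singleton_iff, neg_eq_zero]
      exact (hb_pos n).ne'
    have h1 := hslope.comp hb0
    have h2 := hslope.comp hbneg
    have hcomb := ((h1.add h2).div_const 2)
    have hlim : (h x * z + h x * z) / 2 = z * h x := by ring
    rw [hlim] at hcomb
    have key : ∀ t : ℝ, t ≠ 0 →
        ((φ t - φ 0) / (t - 0) + (φ (-t) - φ 0) / (-t - 0)) / 2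
          = (g (x + t * z) - g (x + (-t) * z)) / (2 * t) := by
      intro t ht
      simp only [hφ, sub_zero]
      generalize g (x + t * z) = A
      generalize g (x + (-t) * z) = B
      generalize g (x + 0 * z) = C
      rw [div_neg, ← sub_eq_add_neg, div_sub_div_same, div_div, mul_comm t 2]
      ring_nf
    refine hcomb.congr fun n => ?_
    have hbne : b n ≠ 0 := (hb_pos n).ne'
    have := key (b n) hbne
    simpa [Function.comp, slope_def_field, hF_def, neg_mul] using this
  have hmF : ∀ n, AEStronglyMeasurable (F n) P := fun n => (hFint n).aestronglyMeasurable
  have := tendsto_integral_of_dominated_convergence (fun ω => L * |Z ω|) hmF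
    ((hZint.abs).const_mul L) hbound hptwise
  have hzero : Tendsto (fun n => ∫ ω, F n ω ∂P) atTop (𝓝 0) := by
    simp only [hF_zero]; exact tendsto_const_nhds
  exact (tendsto_nhds_unique this hzero)

-- sigmoid facts
lemma sigmoid_deriv (s t : ℝ) (hs : 0 < s) (x : ℝ) :
    HasDerivAt (fun x => x - s⁻¹ * Real.log (1 + Real.exp (s * (x - t))))
      ((1 + Real.exp (s * (x - t)))⁻¹) x := by
  have hpos : 0 < 1 + Real.exp (s * (x - t)) := by positivity
  have hu : HasDerivAt (fun x : ℝ => s * (x - t)) s x := by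
    simpa using ((hasDerivAt_id x).sub_const t).const_mul s
  have he : HasDerivAt (fun x : ℝ => Real.exp (s * (x - t)))
      (Real.exp (s * (x - t)) * s) x := (Real.hasDerivAt_exp _).comp x hu
  have hlog : HasDerivAt (fun x : ℝ => Real.log (1 + Real.exp (s * (x - t))))
      ((Real.exp (s * (x - t)) * s) / (1 + Real.exp (s * (x - t)))) x := by
    have h1 : HasDerivAt (fun x : ℝ => 1 + Real.exp (s * (x - t)))
        (Real.exp (s * (x - t)) * s) x := he.const_add 1
    exact h1.log hpos.ne'
  have := (hasDerivAt_id x).sub (hlog.const_mul s⁻¹)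
  refine this.congr_deriv ?_
  field_simp
  ring

lemma sigmoid_mem (s t x : ℝ) : 0 < (1 + Real.exp (s * (x - t)))⁻¹ ∧
    (1 + Real.exp (s * (x - t)))⁻¹ ≤ 1 := by
  have hpos : 0 < 1 + Real.exp (s * (x - t)) := by positivity
  constructor
  · positivity
  · rw [inv_le_one_iff₀]
    right
    linarith [Real.exp_pos (s * (x - t))]

lemma sigmoid_lip (s t : ℝ) (hs : 0 < s) (x y : ℝ) :
    |(fun x => x - s⁻¹ * Real.log (1 + Real.exp (s * (x - t)))) x
      - (fun x => x - s⁻¹ * Real.log (1 + Real.exp (s * (x - t)))) y| ≤ 1 * |x - y| := by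
  have := Convex.norm_image_sub_le_of_norm_hasDerivWithin_le
    (f := fun x => x - s⁻¹ * Real.log (1 + Real.exp (s * (x - t))))
    (f' := fun x => (1 + Real.exp (s * (x - t)))⁻¹) (s := Set.univ) (C := 1)
    (fun x _ => (sigmoid_deriv s t hs x).hasDerivWithinAt)
    (fun x _ => by
      rw [Real.norm_eq_abs, abs_of_pos (sigmoid_mem s t x).1]
      exact (sigmoid_mem s t x).2)
    convex_univ (Set.mem_univ y) (Set.mem_univ x)
  simpa [Real.norm_eq_abs] using this

section
variable {Ω : Type*} [MeasurableSpace Ω] (P : Measure Ω) [IsProbabilityMeasure P]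

lemma key_indicator (W Z : Ω → ℝ) (hW : Measurable W) (hZ : Measurable Z)
    (hWint : Integrable W P) (hZint : Integrable Z P)
    (heven : ∀ b : ℝ, Measure.map (fun ω => W ω + b * Z ω) P
      = Measure.map (fun ω => W ω + (-b) * Z ω) P)
    (t : ℝ) (hWt : P (W ⁻¹' {t}) = 0) :
    ∫ ω in W ⁻¹' (Set.Iic t), Z ω ∂P = 0 := by
  set s : ℕ → ℝ := fun n => (n : ℝ) + 1 with hs_def
  have hs_pos : ∀ n, 0 < s n := fun n => by positivity
  set h : ℕ → ℝ → ℝ := fun n x => (1 + Real.exp (s n * (x - t)))⁻¹ with hh_def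
  set g : ℕ → ℝ → ℝ := fun n x => x - (s n)⁻¹ * Real.log (1 + Real.exp (s n * (x - t)))
    with hg_def
  have hexp_cont : ∀ n, Continuous (fun x : ℝ => 1 + Real.exp (s n * (x - t))) := fun n =>
    continuous_const.add ((continuous_const.mul (continuous_id.sub continuous_const)).rexp)
  have hexp_pos : ∀ n x, (0:ℝ) < 1 + Real.exp (s n * (x - t)) := fun n x => by positivity
  have hh_cont : ∀ n, Continuous (h n) := fun n =>
    (hexp_cont n).inv₀ (fun x => (hexp_pos n x).ne')
  have hg_cont : ∀ n, Continuous (g n) := fun n =>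
    continuous_id.sub (continuous_const.mul ((hexp_cont n).log (fun x => (hexp_pos n x).ne')))
  have hzero : ∀ n, ∫ ω, Z ω * h n (W ω) ∂P = 0 := fun n =>
    key_zero P W Z hW hZ hWint hZint heven (g n) (h n) 1 zero_le_one (hg_cont n) (hh_cont n)
      (sigmoid_lip (s n) t (hs_pos n)) (sigmoid_deriv (s n) t (hs_pos n))
  -- dominated convergence
  have hae : ∀ᵐ ω ∂P, W ω ≠ t := by
    rw [ae_iff]
    convert hWt using 2
    ext ω; simp [Set.mem_preimage]
  have hptwise : ∀ᵐ ω ∂P, Tendsto (fun n => Z ω * h n (W ω)) atTop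
      (𝓝 (Set.indicator (W ⁻¹' (Set.Iic t)) Z ω)) := by
    filter_upwards [hae] with ω hωt
    have hsn : Tendsto s atTop atTop :=
      tendsto_atTop_add_const_right _ 1 tendsto_natCast_atTop_atTop
    rcases lt_or_gt_of_ne hωt with hlt | hgt
    · -- W ω < t : h n (W ω) → 1
      have hneg : W ω - t < 0 := sub_neg.mpr hlt
      have h1 : Tendsto (fun n => s n * (W ω - t)) atTop atBot :=
        hsn.atTop_mul_const_of_neg hneg
      have h2 : Tendsto (fun n => Real.exp (s n * (W ω - t))) atTop (𝓝 0) :=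
        Real.tendsto_exp_atBot.comp h1
      have h3 : Tendsto (fun n => 1 + Real.exp (s n * (W ω - t))) atTop (𝓝 1) := by
        simpa using h2.const_add 1
      have h4 : Tendsto (fun n => h n (W ω)) atTop (𝓝 1) := by
        simpa using h3.inv₀ one_ne_zero
      have : Set.indicator (W ⁻¹' (Set.Iic t)) Z ω = Z ω :=
        Set.indicator_of_mem (by simpa using hlt.le) Z
      rw [this]
      simpa using h4.const_mul (Z ω)
    · -- t < W ω : h n (W ω) → 0
      have hpos : 0 < W ω - t := sub_pos.mpr hgt
      have h1 : Tendsto (fun n => s n * (W ω - t)) atTop atTop :=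
        hsn.atTop_mul_const hpos
      have h2 : Tendsto (fun n => Real.exp (s n * (W ω - t))) atTop atTop :=
        Real.tendsto_exp_atTop.comp h1
      have h3 : Tendsto (fun n => 1 + Real.exp (s n * (W ω - t))) atTop atTop :=
        tendsto_atTop_add_const_left _ 1 h2
      have h4 : Tendsto (fun n => h n (W ω)) atTop (𝓝 0) :=
        tendsto_inv_atTop_zero.comp h3
      have : Set.indicator (W ⁻¹' (Set.Iic t)) Z ω = 0 :=
        Set.indicator_of_notMem (by simpa using not_le.mpr hgt) Z
      rw [this]
      simpa using h4.const_mul (Z ω)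
  have hbound : ∀ n, ∀ᵐ ω ∂P, ‖Z ω * h n (W ω)‖ ≤ |Z ω| := by
    intro n
    refine Filter.Eventually.of_forall fun ω => ?_
    rw [Real.norm_eq_abs, abs_mul]
    have h1 : |h n (W ω)| ≤ 1 := by
      rw [abs_of_pos (sigmoid_mem (s n) t (W ω)).1]
      exact (sigmoid_mem (s n) t (W ω)).2
    nlinarith [abs_nonneg (Z ω), abs_nonneg (h n (W ω))]
  have hmeas : ∀ n, AEStronglyMeasurable (fun ω => Z ω * h n (W ω)) P := fun n =>
    (hZ.mul ((hh_cont n).measurable.comp hW)).aestronglyMeasurable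
  have hDC := tendsto_integral_of_dominated_convergence (fun ω => |Z ω|) hmeas
    hZint.abs hbound hptwise
  have hconst : Tendsto (fun n => ∫ ω, Z ω * h n (W ω) ∂P) atTop (𝓝 0) := by
    simp only [hzero]; exact tendsto_const_nhds
  have : ∫ ω, Set.indicator (W ⁻¹' (Set.Iic t)) Z ω ∂P = 0 := tendsto_nhds_unique hDC hconst
  rwa [integral_indicator (hW measurableSet_Iic)] at this

end

theorem gaussian_condExp
    {Ω : Type*} [m0 : MeasurableSpace Ω] (P : Measure Ω) [IsProbabilityMeasure P]
    (X Y : Ω → ℝ) (hX : Measurable X) (hY : Measurable Y)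
    (Xbar Ybar Sxx Sxy Syy : ℝ)
    (hSxx : 0 < Sxx) (hSyy : 0 ≤ Syy) (hdet : 0 ≤ Sxx * Syy - Sxy ^ 2)
    (hGauss : ∀ a b : ℝ,
      Measure.map (fun ω => a * X ω + b * Y ω) P =
        gaussianReal (a * Xbar + b * Ybar)
          ((a ^ 2 * Sxx + 2 * a * b * Sxy + b ^ 2 * Syy).toNNReal))
    (hYint : Integrable Y P) :
    MeasureTheory.condExp (MeasurableSpace.comap X Real.measurableSpace) P Y
      =ᵐ[P] fun ω => Ybar + (Sxy / Sxx) * (X ω - Xbar) := by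
  set c : ℝ := Sxy / Sxx with hc_def
  set σ2 : ℝ := Syy - Sxy ^ 2 / Sxx with hσ2_def
  set Z : Ω → ℝ := fun ω => Y ω - Ybar - c * (X ω - Xbar) with hZ_def
  have hZmeas : Measurable Z := (hY.sub measurable_const).sub
    ((hX.sub measurable_const).const_mul c)
  -- law of X
  have hmapX : Measure.map X P = gaussianReal Xbar Sxx.toNNReal := by
    have h10 := hGauss 1 0
    have hfun : (fun ω => 1 * X ω + 0 * Y ω) = X := by funext ω; ring
    rw [hfun] at h10
    rw [h10]
    norm_num
  -- X integrable
  have hXint : Integrable X P := by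
    have := integrable_id_gaussianReal Xbar Sxx.toNNReal
    rw [← hmapX] at this
    exact (integrable_map_measure aestronglyMeasurable_id hX.aemeasurable).mp this
  have hXsubint : Integrable (fun ω => X ω - Xbar) P := hXint.sub (integrable_const _)
  have hZint : Integrable Z P :=
    (hYint.sub (integrable_const _)).sub (hXsubint.const_mul c)
  -- law of X + b Z
  have hlaw : ∀ b : ℝ, Measure.map (fun ω => X ω + b * Z ω) P
      = gaussianReal Xbar (Sxx + b ^ 2 * σ2).toNNReal := by
    intro b
    set a : ℝ := 1 - b * c with ha_def
    set k : ℝ := b * (c * Xbar - Ybar) with hk_def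
    have hfun : (fun ω => X ω + b * Z ω)
        = (fun x => x + k) ∘ (fun ω => a * X ω + b * Y ω) := by
      funext ω
      simp only [Function.comp_apply, hZ_def, ha_def, hk_def]
      ring
    rw [hfun, ← Measure.map_map (measurable_add_const k)
      (f := fun ω => a * X ω + b * Y ω) ((hX.const_mul a).add (hY.const_mul b)), hGauss a b, gaussianReal_map_add_const k]
    have hmean : a * Xbar + b * Ybar + k = Xbar := by
      simp only [ha_def, hk_def]; ring
    have hvar : a ^ 2 * Sxx + 2 * a * b * Sxy + b ^ 2 * Syy = Sxx + b ^ 2 * σ2 := by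
      simp only [ha_def, hσ2_def, hc_def]
      field_simp
      ring
    rw [hmean, hvar]
  have heven : ∀ b : ℝ, Measure.map (fun ω => X ω + b * Z ω) P
      = Measure.map (fun ω => X ω + (-b) * Z ω) P := by
    intro b
    rw [hlaw b, hlaw (-b)]
    congr 2
    ring
  -- atomless
  have hWt : ∀ t : ℝ, P (X ⁻¹' {t}) = 0 := by
    intro t
    have h1 : P (X ⁻¹' {t}) = Measure.map X P {t} :=
      (Measure.map_apply hX (measurableSet_singleton t)).symm
    rw [h1, hmapX]
    have hv : Sxx.toNNReal ≠ 0 := by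
      simp [Real.toNNReal_pos.mpr hSxx, ne_of_gt]
    exact gaussianReal_absolutelyContinuous Xbar hv (by simp)
  -- Iic integrals vanish
  have hIic : ∀ t : ℝ, ∫ ω in X ⁻¹' (Set.Iic t), Z ω ∂P = 0 := fun t =>
    key_indicator P X Z hX hZmeas hXint hZint heven t (hWt t)
  -- extend to all Borel sets via measure ext
  have hofReal_lt : ∀ (f : Ω → ℝ), Integrable f P →
      ∫⁻ ω, ENNReal.ofReal (f ω) ∂P < ⊤ := by
    intro f hf
    refine lt_of_le_of_lt ?_ hf.2
    refine lintegral_mono fun ω => ?_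
    rw [Real.enorm_eq_ofReal_abs]
    exact ENNReal.ofReal_le_ofReal (le_abs_self _)
  set μp := Measure.map X (P.withDensity (fun ω => ENNReal.ofReal (Z ω))) with hμp
  set μm := Measure.map X (P.withDensity (fun ω => ENNReal.ofReal (-Z ω))) with hμm
  have hμp_apply : ∀ B : Set ℝ, MeasurableSet B →
      μp B = ∫⁻ ω in X ⁻¹' B, ENNReal.ofReal (Z ω) ∂P := by
    intro B hB
    rw [hμp, Measure.map_apply hX hB, withDensity_apply _ (hX hB)]
  have hμm_apply : ∀ B : Set ℝ, MeasurableSet B →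
      μm B = ∫⁻ ω in X ⁻¹' B, ENNReal.ofReal (-Z ω) ∂P := by
    intro B hB
    rw [hμm, Measure.map_apply hX hB, withDensity_apply _ (hX hB)]
  have hsetZ : ∀ B : Set ℝ, MeasurableSet B →
      ∫ ω in X ⁻¹' B, Z ω ∂P = (μp B).toReal - (μm B).toReal := by
    intro B hB
    rw [hμp_apply B hB, hμm_apply B hB]
    exact integral_eq_lintegral_pos_part_sub_lintegral_neg_part hZint.restrict
  haveI hfinp : IsFiniteMeasure μp := by
    constructor
    rw [hμp_apply Set.univ MeasurableSet.univ, Set.preimage_univ, Measure.restrict_univ]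
    exact hofReal_lt Z hZint
  haveI hfinm : IsFiniteMeasure μm := by
    constructor
    rw [hμm_apply Set.univ MeasurableSet.univ, Set.preimage_univ, Measure.restrict_univ]
    exact hofReal_lt _ hZint.neg
  have hext : μp = μm := by
    refine Measure.ext_of_Iic μp μm fun t => ?_
    have h0 := hIic t
    rw [hsetZ _ measurableSet_Iic] at h0
    have h1 : (μp (Set.Iic t)).toReal = (μm (Set.Iic t)).toReal := by linarith
    exact (ENNReal.toReal_eq_toReal_iff' (measure_ne_top _ _) (measure_ne_top _ _)).mp h1
  have hsetint : ∀ B : Set ℝ, MeasurableSet B → ∫ ω in X ⁻¹' B, Z ω ∂P = 0 := by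
    intro B hB
    rw [hsetZ B hB, hext, sub_self]
  -- final assembly
  have hgInt : Integrable (fun ω => Ybar + c * (X ω - Xbar)) P :=
    (integrable_const _).add (hXsubint.const_mul c)
  have hXc : Measurable[MeasurableSpace.comap X Real.measurableSpace] X :=
    measurable_iff_comap_le.mpr le_rfl
  have hgm : Measurable[MeasurableSpace.comap X Real.measurableSpace]
      (fun ω => Ybar + c * (X ω - Xbar)) :=
    ((hXc.sub measurable_const).const_mul c).const_add Ybar
  refine (ae_eq_condExp_of_forall_setIntegral_eq hX.comap_le hYint
    (fun s _ _ => hgInt.integrableOn) ?_ ?_).symm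
  · intro s hs _
    obtain ⟨B, hB, rfl⟩ := hs
    have h0 := hsetint B hB
    have h1 : ∫ ω in X ⁻¹' B, (Y ω - (Ybar + c * (X ω - Xbar))) ∂P = 0 := by
      rw [← h0]
      refine integral_congr_ae (Filter.Eventually.of_forall fun ω => ?_)
      simp only [hZ_def]
      ring
    rw [integral_sub hYint.integrableOn hgInt.integrableOn] at h1
    linarith
  · exact hgm.aestronglyMeasurable
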